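/- arXiv:1909.04065 — 2 statements merged into one kernel-verified Lean document; each statement's English description precedes it below -/
import Mathlib

section
/- Theorem (games characterize strategy generation): Assume Z : Strat → ℝⁿ is injective and for every resource R the set S(R) = { Z(E) : E ∈ Strat, R ⪰ E } is nonempty, compact and convex. Then R outperforms R' at all linear games factoring through Z (i.e. for all linear F : ℝⁿ → ℝ, max over S(R) of F ≥ max over S(R') of F) if and only if every strategy E ∈ Strat with R' ⪰ E satisfies R ⪰ E. -/
/-- Theorem 2 (abstract): with an injective analyzer `Z` and nonempty compact
convex achievable sets, `R` outperforms `R'` at all linear games factoring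
through `Z` iff every strategy generable from `R'` is generable from `R`. -/
theorem stmt_8 {Res : Type*} {n : ℕ} (r : Res → Res → Prop)
    (Strat : Set Res) (Z : Res → EuclideanSpace ℝ (Fin n))
    (hZ : ∀ E ∈ Strat, ∀ E' ∈ Strat, Z E = Z E' → E = E')
    (S : Res → Set (EuclideanSpace ℝ (Fin n)))
    (hS : ∀ Q, S Q = {p | ∃ E ∈ Strat, r Q E ∧ Z E = p})
    (hne : ∀ Q, (S Q).Nonempty) (hcpt : ∀ Q, IsCompact (S Q))
    (hconv : ∀ Q, Convex ℝ (S Q)) (R R' : Res) :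
    (∀ F : EuclideanSpace ℝ (Fin n) →ₗ[ℝ] ℝ,
        sSup (F '' S R') ≤ sSup (F '' S R)) ↔
    (∀ E ∈ Strat, r R' E → r R E) := by
  constructor
  · intro h E hE hrE
    -- First show S R' ⊆ S R
    have hsub : S R' ⊆ S R := by
      intro p hp
      by_contra hpR
      obtain ⟨F, u, hlt, hu⟩ := geometric_hahn_banach_closed_point
        (hconv R) (hcpt R).isClosed hpR
      have hbR : BddAbove (F.toLinearMap '' S R) :=
        ((hcpt R).image F.continuous).bddAbove
      have hbR' : BddAbove (F.toLinearMap '' S R') :=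
        ((hcpt R').image F.continuous).bddAbove
      have h1 : sSup (F.toLinearMap '' S R) ≤ u := by
        apply csSup_le ((hne R).image _)
        rintro x ⟨a, ha, rfl⟩
        exact (hlt a ha).le
      have h2 : F p ≤ sSup (F.toLinearMap '' S R') :=
        le_csSup hbR' ⟨p, hp, rfl⟩
      have := (h2.trans (h F.toLinearMap)).trans h1
      linarith
    have hp : Z E ∈ S R' := by rw [hS]; exact ⟨E, hE, hrE, rfl⟩
    have := hsub hp
    rw [hS] at this
    obtain ⟨E', hE', hrE', hZE⟩ := this
    rwa [hZ E' hE' E hE hZE] at hrE'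
  · intro h F
    have hsub : S R' ⊆ S R := by
      intro p hp
      rw [hS] at hp ⊢
      obtain ⟨E, hE, hrE, hZE⟩ := hp
      exact ⟨E, hE, h E hE hrE, hZE⟩
    have hFc : Continuous F := F.continuous_of_finiteDimensional
    exact csSup_le_csSup ((hcpt R).image hFc).bddAbove
      ((hne R').image _) (Set.image_mono hsub)
end

section
/- Theorem (higher-type games characterize the preorder of lower types): Suppose type T encodes type T', i.e. for every resource R' of type T' there exists a strategy E of type T with R' ⪰ E and E ⪰ R'. Suppose further (as in Theorem 2) that for all resources R₁, R₂: R₁ ⪰_{G_T} R₂ implies (∀ E of type T, R₂ ⪰ E → R₁ ⪰ E). Then for resources R₁, R₂ of type T': R₁ ⪰ R₂ if and only if R₁ ⪰_{G_T} R₂. -/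
/-- Theorem 3 (abstract): if type `T` encodes type `T'`, and outperformance at
all `T`-games implies the ability to generate the same `T`-strategies, then for
resources of type `T'` the free preorder and the game preorder coincide. -/
theorem stmt_9 {Res TypeLabels : Type*} (r : Res → Res → Prop)
    (htrans : Transitive r) (gt : Res → Res → Prop)
    (ty : Res → TypeLabels) (Strat : Set Res) (T' : TypeLabels)
    (hmono : ∀ R₁ R₂, r R₁ R₂ → gt R₁ R₂)
    (hgen : ∀ R₁ R₂, gt R₁ R₂ → ∀ E ∈ Strat, r R₂ E → r R₁ E)
    (henc : ∀ R', ty R' = T' → ∃ E ∈ Strat, r R' E ∧ r E R') :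
    ∀ R₁ R₂, ty R₁ = T' → ty R₂ = T' → (r R₁ R₂ ↔ gt R₁ R₂) := by
  intro R₁ R₂ h₁ h₂
  constructor
  · exact hmono R₁ R₂
  · intro hgt
    obtain ⟨E, hE, hre, her⟩ := henc R₂ h₂
    exact htrans (hgen R₁ R₂ hgt E hE hre) her
end
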